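/- Let \mu, \nu, D, d, R > 0 and let h : [0, \infty) \to [0,\infty) be continuous with h(0)=0, h increasing, and suppose h(\beta R) = \beta^2 R^2/(2(\tau+1)) (1 + o(1)) as \beta R \to 0 with \tau = (N-3)/2, N = 2. For a positive function \tilde\mu(R) with \lim_{R\to 0} \tilde\mu(R)/R = \mu, define \beta(\delta, R) implicitly by d\delta = \nu D h(\beta R)/(\tilde\mu(R) R - D h(\beta R)) for \delta > 0. Then, as R \to 0, D \beta(\delta, R)^2 \to \mu d \delta/(\nu + d\delta), locally uniformly in \delta > 0. -/

import Mathlib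

set_option maxHeartbeats 1000000

/-- Singular limit `R → 0` of the strip problem (`N = 2`, `τ = -1/2`, so
`2(τ+1) = 1`). With `h(s) = s²(1 + o(1))` as `s → 0⁺`, `h` increasing and continuous with
`h(0) = 0`, `μ̃(R)/R → μ`, and `β(δ,R) > 0` implicitly defined by
`dδ = νD h(βR)/(μ̃(R)R - D h(βR))`, one has `Dβ(δ,R)² → μdδ/(ν + dδ)` as `R → 0⁺`,
locally uniformly in `δ > 0`. -/
theorem stmt19 (μ ν D d : ℝ) (hμ : 0 < μ) (hν : 0 < ν) (hD : 0 < D) (hd : 0 < d)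
    (h : ℝ → ℝ) (hcont : ContinuousOn h (Set.Ici 0)) (h0 : h 0 = 0)
    (hmono : StrictMonoOn h (Set.Ici 0))
    (hasymp : Filter.Tendsto (fun s : ℝ => h s / s ^ 2)
      (nhdsWithin 0 (Set.Ioi 0)) (nhds 1))
    (μt : ℝ → ℝ) (hμt : ∀ R : ℝ, 0 < R → 0 < μt R)
    (hμtlim : Filter.Tendsto (fun R : ℝ => μt R / R)
      (nhdsWithin 0 (Set.Ioi 0)) (nhds μ))
    (β : ℝ → ℝ → ℝ)
    (hβpos : ∀ δ R : ℝ, 0 < δ → 0 < R → 0 < β δ R)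
    (hβ : ∀ δ R : ℝ, 0 < δ → 0 < R →
      d * δ = ν * D * h (β δ R * R) / (μt R * R - D * h (β δ R * R))) :
    TendstoLocallyUniformlyOn (fun R : ℝ => fun δ : ℝ => D * (β δ R) ^ 2)
      (fun δ : ℝ => μ * d * δ / (ν + d * δ))
      (nhdsWithin 0 (Set.Ioi 0)) (Set.Ioi 0) := by
  -- key identity: D * h(βR) = dδ (μ̃(R) R) / (ν + dδ)
  have key : ∀ δ R : ℝ, 0 < δ → 0 < R →
      D * h (β δ R * R) = d * δ * (μt R * R) / (ν + d * δ) := by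
    intro δ R hδ hR
    have hx : 0 < β δ R * R := mul_pos (hβpos δ R hδ hR) hR
    have hH : 0 < h (β δ R * R) := by
      have := hmono (Set.self_mem_Ici) (Set.mem_Ici.mpr hx.le) hx
      simpa [h0] using this
    have heq := hβ δ R hδ hR
    have hS : μt R * R - D * h (β δ R * R) ≠ 0 := by
      intro hS0
      rw [hS0, div_zero] at heq
      exact absurd heq (mul_pos hd hδ).ne'
    have hν' : ν + d * δ ≠ 0 := by positivity
    rw [eq_div_iff hS] at heq
    rw [eq_div_iff hν']
    linarith [heq]
  have main : TendstoUniformlyOn (fun R : ℝ => fun δ : ℝ => D * (β δ R) ^ 2)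
      (fun δ : ℝ => μ * d * δ / (ν + d * δ))
      (nhdsWithin 0 (Set.Ioi 0)) (Set.Ioi 0) := by
    rw [Metric.tendstoUniformlyOn_iff]
    intro ε hε
    set ε₁ : ℝ := ε / 4 with hε₁def
    have hε₁ : 0 < ε₁ := by positivity
    set ε₂ : ℝ := min (1/2) (ε / (4 * (μ + 1))) with hε₂def
    have hε₂ : 0 < ε₂ := by
      apply lt_min (by norm_num)
      positivity
    obtain ⟨η, hη, hηP⟩ := Metric.tendsto_nhdsWithin_nhds.mp hasymp ε₂ hε₂
    obtain ⟨η₁, hη₁, hη₁P⟩ := Metric.tendsto_nhdsWithin_nhds.mp hμtlim ε₁ hε₁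
    have hhη : 0 < h η := by
      have := hmono (Set.self_mem_Ici) (Set.mem_Ici.mpr hη.le) hη
      simpa [h0] using this
    -- μt R * R → 0
    have hT : Filter.Tendsto (fun R : ℝ => μt R * R) (nhdsWithin 0 (Set.Ioi 0)) (nhds 0) := by
      have h1 : Filter.Tendsto (fun R : ℝ => (μt R / R) * (R * R))
          (nhdsWithin 0 (Set.Ioi 0)) (nhds (μ * (0 * 0))) := by
        apply hμtlim.mul
        exact ((continuous_id.mul continuous_id).tendsto 0).mono_left nhdsWithin_le_nhds
      rw [show μ * ((0:ℝ) * 0) = 0 by ring] at h1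
      apply h1.congr'
      filter_upwards [self_mem_nhdsWithin] with R hR
      have hR0 : (R:ℝ) ≠ 0 := ne_of_gt hR
      field_simp
    have ev2 : ∀ᶠ R in nhdsWithin 0 (Set.Ioi 0), μt R * R < D * h η :=
      hT.eventually_lt_const (by positivity)
    have ev1 : ∀ᶠ R in nhdsWithin 0 (Set.Ioi 0), R < η₁ :=
      eventually_nhdsWithin_of_eventually_nhds (eventually_lt_nhds hη₁)
    filter_upwards [self_mem_nhdsWithin, ev1, ev2] with R hR hR1 hR2
    intro δ hδ
    have hRpos : (0:ℝ) < R := hR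
    have hδpos : (0:ℝ) < δ := hδ
    set x : ℝ := β δ R * R with hxdef
    have hx : 0 < x := mul_pos (hβpos δ R hδpos hRpos) hRpos
    have hν' : (0:ℝ) < ν + d * δ := by positivity
    have hfrac1 : d * δ / (ν + d * δ) ≤ 1 := by
      rw [div_le_one hν']; linarith [mul_pos hd hδpos]
    have hfrac0 : 0 < d * δ / (ν + d * δ) := by positivity
    have hM : 0 < μt R * R := mul_pos (hμt R hRpos) hRpos
    have hDH := key δ R hδpos hRpos
    -- x < η
    have hxη : x < η := by
      by_contra hle
      push_neg at hle
      have h1 : h η ≤ h x :=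
        hmono.monotoneOn (Set.mem_Ici.mpr hη.le) (Set.mem_Ici.mpr hx.le) hle
      have h2 : D * h x ≤ μt R * R := by
        rw [hDH]
        calc d * δ * (μt R * R) / (ν + d * δ)
            = (μt R * R) * (d * δ / (ν + d * δ)) := by ring
          _ ≤ (μt R * R) * 1 := by
              apply mul_le_mul_of_nonneg_left hfrac1 hM.le
          _ = μt R * R := by ring
      nlinarith
    -- q close to 1
    set q : ℝ := h x / x ^ 2 with hqdef
    have hq : |q - 1| < ε₂ := by
      have := hηP (Set.mem_Ioi.mpr hx) (by rw [Real.dist_eq]; rwa [sub_zero, abs_of_pos hx])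
      rwa [Real.dist_eq] at this
    have hε₂half : ε₂ ≤ 1/2 := min_le_left _ _
    have hqlb : 1/2 < q := by
      have := abs_lt.mp hq
      linarith
    have hq0 : q ≠ 0 := by linarith
    -- μt R / R close to μ
    have hA : |μt R / R - μ| < ε₁ := by
      have := hη₁P (Set.mem_Ioi.mpr hRpos) (by rw [Real.dist_eq, sub_zero, abs_of_pos hRpos]; exact hR1)
      rwa [Real.dist_eq] at this
    set A : ℝ := μt R / R with hAdef
    -- express D β²
    have hHq : h x = q * x ^ 2 := by
      rw [hqdef]; field_simp
    have hβsq : D * (β δ R) ^ 2 = (d * δ / (ν + d * δ)) * (A / q) := by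
      have hR0 : R ≠ 0 := ne_of_gt hRpos
      have hx2 : x ^ 2 = (β δ R) ^ 2 * R ^ 2 := by rw [hxdef]; ring
      have hDHm : D * (q * ((β δ R) ^ 2 * R ^ 2)) * (ν + d * δ) = d * δ * (μt R * R) := by
        rw [hHq, hx2, eq_div_iff (ne_of_gt hν')] at hDH
        exact hDH
      have hqpos : (0:ℝ) < q := by linarith
      have hne : (ν + d * δ) * q * R ≠ 0 := by positivity
      apply mul_right_cancel₀ hne
      have expand : ((d * δ / (ν + d * δ)) * (A / q)) * ((ν + d * δ) * q * R)
          = d * δ * μt R := by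
        rw [hAdef]; field_simp
      rw [expand]
      have h2 : (D * (β δ R) ^ 2 * ((ν + d * δ) * q * R)) * R = (d * δ * μt R) * R := by
        linear_combination hDHm
      exact mul_right_cancel₀ hR0 h2
    rw [Real.dist_eq]
    have hsplit : μ * d * δ / (ν + d * δ) - D * (β δ R) ^ 2
        = (d * δ / (ν + d * δ)) * (μ - A / q) := by
      rw [hβsq]; ring
    rw [hsplit, abs_mul, abs_of_pos hfrac0]
    have hbd1 : |μ - A / q| ≤ 2 * |μ * q - A| := by
      have : μ - A / q = (μ * q - A) / q := by field_simp
      rw [this, abs_div, abs_of_pos (by linarith : (0:ℝ) < q)]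
      rw [div_le_iff₀ (by linarith : (0:ℝ) < q)]
      nlinarith [abs_nonneg (μ * q - A)]
    have hbd2 : |μ * q - A| ≤ μ * |q - 1| + |μ - A| := by
      have : μ * q - A = μ * (q - 1) + (μ - A) := by ring
      rw [this]
      calc |μ * (q - 1) + (μ - A)| ≤ |μ * (q - 1)| + |μ - A| := abs_add_le _ _
        _ = μ * |q - 1| + |μ - A| := by rw [abs_mul, abs_of_pos hμ]
    have hμε₂ : μ * ε₂ ≤ ε / 4 := by
      have h1 : ε₂ ≤ ε / (4 * (μ + 1)) := min_le_right _ _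
      have h2 : μ * ε₂ ≤ μ * (ε / (4 * (μ + 1))) := by nlinarith
      have h3 : μ * (ε / (4 * (μ + 1))) ≤ ε / 4 := by
        rw [show μ * (ε / (4 * (μ + 1))) = μ * ε / (4 * (μ + 1)) from by ring,
          div_le_div_iff₀ (by positivity : (0:ℝ) < 4 * (μ + 1)) (by norm_num : (0:ℝ) < 4)]
        nlinarith
      linarith
    have habs : |μ - A| = |A - μ| := abs_sub_comm _ _
    calc d * δ / (ν + d * δ) * |μ - A / q| ≤ 1 * |μ - A / q| := by
          apply mul_le_mul_of_nonneg_right hfrac1 (abs_nonneg _)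
      _ = |μ - A / q| := one_mul _
      _ ≤ 2 * |μ * q - A| := hbd1
      _ ≤ 2 * (μ * |q - 1| + |μ - A|) := by linarith
      _ < 2 * (μ * ε₂ + ε₁) := by
          have h1 : μ * |q - 1| ≤ μ * ε₂ := mul_le_mul_of_nonneg_left hq.le hμ.le
          rw [habs]
          linarith
      _ ≤ 2 * (ε / 4 + ε / 4) := by rw [hε₁def]; linarith
      _ = ε := by ring
  exact main.tendstoLocallyUniformlyOn
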